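/- For every x > 0, erfc(x) < (1/2)·exp(−2x²) + (1/2)·exp(−x²). -/

import Mathlib

open Real MeasureTheory Set Filter
open scoped ENNReal

/-- The Gauss error function `erf x = (2/√π) ∫₀ˣ e^{−t²} dt`. -/
noncomputable def erf (x : ℝ) : ℝ := 2 / Real.sqrt Real.pi * ∫ t in (0:ℝ)..x, Real.exp (-t ^ 2)

/-- The complementary error function `erfc x = 1 - erf x`. -/
noncomputable def erfc (x : ℝ) : ℝ := 1 - erf x

noncomputable def psiAux (t : ℝ) : ℝ := t - 2 / Real.sqrt Real.pi + 2 * t * Real.exp (-t ^ 2)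

noncomputable def phiAux (t : ℝ) : ℝ := Real.exp (-t ^ 2) * psiAux t

lemma hasDerivAt_exp_neg_sq (t : ℝ) :
    HasDerivAt (fun u : ℝ => Real.exp (-u ^ 2)) (Real.exp (-t ^ 2) * (-2 * t)) t := by
  have h1 : HasDerivAt (fun u : ℝ => -u ^ 2) (-2 * t) t := by
    exact (hasDerivAt_pow 2 t).neg.congr_deriv (by push_cast; ring)
  exact h1.exp

lemma hasDerivAt_exp_neg_two_sq (t : ℝ) :
    HasDerivAt (fun u : ℝ => Real.exp (-(2 * u ^ 2))) (Real.exp (-(2 * t ^ 2)) * (-4 * t)) t := by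
  have h1 : HasDerivAt (fun u : ℝ => -(2 * u ^ 2)) (-4 * t) t := by
    have := ((hasDerivAt_pow 2 t).const_mul 2).neg
    exact this.congr_deriv (by push_cast; ring)
  exact h1.exp

lemma hasDerivAt_psiAux (t : ℝ) :
    HasDerivAt psiAux (1 + (2 - 4 * t ^ 2) * Real.exp (-t ^ 2)) t := by
  have h2 := hasDerivAt_exp_neg_sq t
  have h3 : HasDerivAt (fun u : ℝ => 2 * u) 2 t := by
    simpa using (hasDerivAt_id t).const_mul 2
  have h4 := h3.mul h2
  have h5 : HasDerivAt (fun u : ℝ => u - 2 / Real.sqrt Real.pi) 1 t :=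
    (hasDerivAt_id t).sub_const _
  have := h5.add h4
  exact this.congr_deriv (by ring)

lemma psiAux_deriv_pos (t : ℝ) : 0 < 1 + (2 - 4 * t ^ 2) * Real.exp (-t ^ 2) := by
  set s := t ^ 2 with hs_def
  have hs : 0 ≤ s := sq_nonneg t
  have hexp : 1 + s + s ^ 2 / 2 + s ^ 3 / 6 ≤ Real.exp s := by
    have := Real.sum_le_exp_of_nonneg hs 4
    norm_num [Finset.sum_range_succ, Nat.factorial] at this
    linarith
  have h1 : 4 * s - 2 < Real.exp s := by
    nlinarith [mul_nonneg hs (sq_nonneg (s - 2))]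
  have h2 : (4 * s - 2) * Real.exp (-s) < Real.exp s * Real.exp (-s) :=
    mul_lt_mul_of_pos_right h1 (Real.exp_pos _)
  rw [← Real.exp_add] at h2
  simp at h2
  linarith

lemma psiAux_strictMono : StrictMono psiAux :=
  strictMono_of_hasDerivAt_pos (fun t => hasDerivAt_psiAux t) (fun t => psiAux_deriv_pos t)

lemma continuous_psiAux : Continuous psiAux := by
  unfold psiAux; continuity

lemma continuous_phiAux : Continuous phiAux := by
  unfold phiAux psiAux; continuity

lemma sqrt_pi_pos : 0 < Real.sqrt Real.pi := Real.sqrt_pos.mpr Real.pi_pos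

lemma psiAux_zero_neg : psiAux 0 < 0 := by
  unfold psiAux
  simp
  positivity

lemma psiAux_one_pos : 0 < psiAux 1 := by
  unfold psiAux
  have hsqrt : (6:ℝ)/5 < Real.sqrt Real.pi := by
    rw [show (6:ℝ)/5 = Real.sqrt ((6/5)^2) by rw [Real.sqrt_sq]; norm_num]
    apply Real.sqrt_lt_sqrt (by positivity)
    nlinarith [Real.pi_gt_three]
  have h1 : 2 / Real.sqrt Real.pi < 5/3 := by
    rw [div_lt_iff₀ sqrt_pi_pos]
    nlinarith
  have h2 : (1:ℝ)/3 < Real.exp (-1 ^ 2) := by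
    norm_num
    rw [Real.exp_neg]
    rw [inv_eq_one_div, lt_div_iff₀ (Real.exp_pos 1)]
    nlinarith [Real.exp_one_lt_d9]
  nlinarith

/-- phiAux written as an explicit combination. -/
lemma phiAux_eq (t : ℝ) : phiAux t =
    t * Real.exp (-t ^ 2) + 2 * t * Real.exp (-(2 * t ^ 2))
      - 2 / Real.sqrt Real.pi * Real.exp (-t ^ 2) := by
  unfold phiAux psiAux
  have h : Real.exp (-t ^ 2) * Real.exp (-t ^ 2) = Real.exp (-(2 * t ^ 2)) := by
    rw [← Real.exp_add]; ring_nf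
  linear_combination (2 * t) * h

lemma integrable_A : Integrable (fun t : ℝ => t * Real.exp (-t ^ 2)) := by
  have := integrable_mul_exp_neg_mul_sq (b := 1) one_pos
  simpa using this

lemma integrable_B : Integrable (fun t : ℝ => 2 * t * Real.exp (-(2 * t ^ 2))) := by
  have := (integrable_mul_exp_neg_mul_sq (b := 2) two_pos).const_mul 2
  apply this.congr
  filter_upwards with t
  ring_nf

lemma integrable_C : Integrable (fun t : ℝ => 2 / Real.sqrt Real.pi * Real.exp (-t ^ 2)) := by
  have := (integrable_exp_neg_mul_sq (b := 1) one_pos).const_mul (2 / Real.sqrt Real.pi)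
  simpa using this

lemma integrable_phiAux : Integrable phiAux := by
  apply ((integrable_A.add integrable_B).sub integrable_C).congr
  filter_upwards with t
  simp only [Pi.add_apply, Pi.sub_apply]
  rw [phiAux_eq]

/-- The total integral of phiAux over (0,∞) is zero. -/
lemma integral_phiAux_Ioi_zero : ∫ t in Ioi (0:ℝ), phiAux t = 0 := by
  have tend1 : Tendsto (fun t : ℝ => (-1/2 : ℝ) * Real.exp (-t ^ 2)) atTop (nhds 0) := by
    have h1 : Tendsto (fun t : ℝ => -t ^ 2) atTop atBot :=
      tendsto_neg_atBot_iff.mpr (tendsto_pow_atTop two_ne_zero)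
    have h2 := (Real.tendsto_exp_atBot).comp h1
    have := h2.const_mul (-1/2 : ℝ)
    simpa using this
  have tend2 : Tendsto (fun t : ℝ => (-1/2 : ℝ) * Real.exp (-(2 * t ^ 2))) atTop (nhds 0) := by
    have h1 : Tendsto (fun t : ℝ => -(2 * t ^ 2)) atTop atBot := by
      apply tendsto_neg_atBot_iff.mpr
      exact (tendsto_pow_atTop two_ne_zero).const_mul_atTop two_pos
    have h2 := (Real.tendsto_exp_atBot).comp h1
    have := h2.const_mul (-1/2 : ℝ)
    simpa using this
  have h1 : ∫ t in Ioi (0:ℝ), t * Real.exp (-t ^ 2) = 1/2 := by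
    have := integral_Ioi_of_hasDerivAt_of_tendsto
      (f := fun t : ℝ => (-1/2 : ℝ) * Real.exp (-t ^ 2))
      (f' := fun t : ℝ => t * Real.exp (-t ^ 2)) (a := 0)
      (Continuous.continuousWithinAt (by continuity))
      (fun t _ => by
        have := (hasDerivAt_exp_neg_sq t).const_mul (-1/2 : ℝ)
        exact this.congr_deriv (by ring))
      integrable_A.integrableOn
      tend1
    rw [this]
    norm_num
  have h2 : ∫ t in Ioi (0:ℝ), 2 * t * Real.exp (-(2 * t ^ 2)) = 1/2 := by
    have := integral_Ioi_of_hasDerivAt_of_tendsto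
      (f := fun t : ℝ => (-1/2 : ℝ) * Real.exp (-(2 * t ^ 2)))
      (f' := fun t : ℝ => 2 * t * Real.exp (-(2 * t ^ 2))) (a := 0)
      (Continuous.continuousWithinAt (by continuity))
      (fun t _ => by
        have := (hasDerivAt_exp_neg_two_sq t).const_mul (-1/2 : ℝ)
        exact this.congr_deriv (by ring))
      integrable_B.integrableOn
      tend2
    rw [this]
    norm_num
  have h3 : ∫ t in Ioi (0:ℝ), 2 / Real.sqrt Real.pi * Real.exp (-t ^ 2) = 1 := by
    rw [MeasureTheory.integral_const_mul]
    have := integral_gaussian_Ioi 1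
    simp only [neg_mul, one_mul, div_one] at this
    rw [this]
    field_simp
  calc ∫ t in Ioi (0:ℝ), phiAux t
      = ∫ t in Ioi (0:ℝ), (t * Real.exp (-t ^ 2) + 2 * t * Real.exp (-(2 * t ^ 2))
          - 2 / Real.sqrt Real.pi * Real.exp (-t ^ 2)) := by
        apply integral_congr_ae
        filter_upwards with t
        rw [phiAux_eq]
    _ = 1/2 + 1/2 - 1 := by
        have iAB : IntegrableOn (fun t : ℝ => t * Real.exp (-t ^ 2)
            + 2 * t * Real.exp (-(2 * t ^ 2))) (Ioi 0) :=
          (integrable_A.add integrable_B).integrableOn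
        rw [MeasureTheory.integral_sub iAB integrable_C.integrableOn,
          MeasureTheory.integral_add integrable_A.integrableOn integrable_B.integrableOn,
          h1, h2, h3]
    _ = 0 := by norm_num

lemma key_integral_neg (x : ℝ) (hx : 0 < x) : ∫ t in (0:ℝ)..x, phiAux t < 0 := by
  obtain ⟨c, hc01, hc⟩ : ∃ c ∈ Ioo (0:ℝ) 1, psiAux c = 0 := by
    have := intermediate_value_Ioo (zero_le_one) continuous_psiAux.continuousOn
      (a := 0) (b := 1)
    have h0 : (0:ℝ) ∈ Ioo (psiAux 0) (psiAux 1) := ⟨psiAux_zero_neg, psiAux_one_pos⟩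
    obtain ⟨c, hc1, hc2⟩ := this h0
    exact ⟨c, hc1, hc2⟩
  rcases le_or_gt x c with hxc | hcx
  · -- x ≤ c : phiAux < 0 on (0, x)
    have hpos : ∀ t ∈ Ioo (0:ℝ) x, 0 < -phiAux t := by
      intro t ht
      have h1 : psiAux t < 0 := by
        rw [← hc]
        exact psiAux_strictMono (lt_of_lt_of_le ht.2 hxc)
      have := mul_pos (Real.exp_pos (-t ^ 2)) (neg_pos.mpr h1)
      unfold phiAux
      nlinarith
    have := intervalIntegral.intervalIntegral_pos_of_pos_on
      (f := fun t => -phiAux t)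
      (continuous_phiAux.neg.intervalIntegrable 0 x) hpos hx
    rw [intervalIntegral.integral_neg] at this
    linarith
  · -- c < x
    have hIoc : ∫ t in (0:ℝ)..x, phiAux t = ∫ t in Ioc (0:ℝ) x, phiAux t :=
      intervalIntegral.integral_of_le hx.le
    have hunion : (∫ t in Ioc (0:ℝ) x, phiAux t) + ∫ t in Ioi x, phiAux t
        = ∫ t in Ioi (0:ℝ), phiAux t := by
      rw [← MeasureTheory.setIntegral_union Ioc_disjoint_Ioi_same measurableSet_Ioi
        integrable_phiAux.integrableOn integrable_phiAux.integrableOn,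
        Ioc_union_Ioi_eq_Ioi hx.le]
    have hpos : 0 < ∫ t in Ioi x, phiAux t := by
      have hnonneg : 0 ≤ᵐ[volume.restrict (Ioi x)] phiAux := by
        rw [EventuallyLE, ae_restrict_iff' measurableSet_Ioi]
        filter_upwards with t ht
        have h1 : 0 < psiAux t := by
          rw [← hc]
          exact psiAux_strictMono (hcx.trans ht)
        unfold phiAux
        positivity
      rw [MeasureTheory.setIntegral_pos_iff_support_of_nonneg_ae hnonneg
        integrable_phiAux.integrableOn]
      have hsub : Ioi x ⊆ Function.support phiAux ∩ Ioi x := by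
        intro t ht
        refine ⟨?_, ht⟩
        have h1 : 0 < psiAux t := by
          rw [← hc]
          exact psiAux_strictMono (hcx.trans ht)
        have h2 : 0 < phiAux t := by
          unfold phiAux; positivity
        exact h2.ne'
      calc (0:ℝ≥0∞) < volume (Ioi x) := by simp [Real.volume_Ioi]
        _ ≤ volume (Function.support phiAux ∩ Ioi x) := measure_mono hsub
    rw [hIoc]
    have htot := integral_phiAux_Ioi_zero
    linarith

/-- For every `x > 0`, `erfc x < (1/2)·exp(−2x²) + (1/2)·exp(−x²)`. -/
theorem erfc_lt_half_exp_add (x : ℝ) (hx : 0 < x) :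
    erfc x < 1 / 2 * Real.exp (-(2 * x ^ 2)) + 1 / 2 * Real.exp (-x ^ 2) := by
  have hA : IntervalIntegrable (fun t : ℝ => t * Real.exp (-t ^ 2)) volume 0 x := by
    apply Continuous.intervalIntegrable; continuity
  have hB : IntervalIntegrable (fun t : ℝ => 2 * t * Real.exp (-(2 * t ^ 2))) volume 0 x := by
    apply Continuous.intervalIntegrable; continuity
  have hC : IntervalIntegrable (fun t : ℝ => 2 / Real.sqrt Real.pi * Real.exp (-t ^ 2))
      volume 0 x := by
    apply Continuous.intervalIntegrable; continuity
  have hInt1 : ∫ t in (0:ℝ)..x, t * Real.exp (-t ^ 2)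
      = 1/2 - 1/2 * Real.exp (-x ^ 2) := by
    have := intervalIntegral.integral_eq_sub_of_hasDerivAt
      (f := fun t : ℝ => (-1/2 : ℝ) * Real.exp (-t ^ 2))
      (f' := fun t : ℝ => t * Real.exp (-t ^ 2)) (a := 0) (b := x)
      (fun t _ => by
        have := (hasDerivAt_exp_neg_sq t).const_mul (-1/2 : ℝ)
        exact this.congr_deriv (by ring))
      hA
    rw [this]
    norm_num
    ring
  have hInt2 : ∫ t in (0:ℝ)..x, 2 * t * Real.exp (-(2 * t ^ 2))
      = 1/2 - 1/2 * Real.exp (-(2 * x ^ 2)) := by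
    have := intervalIntegral.integral_eq_sub_of_hasDerivAt
      (f := fun t : ℝ => (-1/2 : ℝ) * Real.exp (-(2 * t ^ 2)))
      (f' := fun t : ℝ => 2 * t * Real.exp (-(2 * t ^ 2))) (a := 0) (b := x)
      (fun t _ => by
        have := (hasDerivAt_exp_neg_two_sq t).const_mul (-1/2 : ℝ)
        exact this.congr_deriv (by ring))
      hB
    rw [this]
    norm_num
    ring
  have hSplit : ∫ t in (0:ℝ)..x, phiAux t
      = (∫ t in (0:ℝ)..x, t * Real.exp (-t ^ 2))
        + (∫ t in (0:ℝ)..x, 2 * t * Real.exp (-(2 * t ^ 2)))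
        - 2 / Real.sqrt Real.pi * ∫ t in (0:ℝ)..x, Real.exp (-t ^ 2) := by
    have heq : ∫ t in (0:ℝ)..x, phiAux t
        = ∫ t in (0:ℝ)..x, (t * Real.exp (-t ^ 2) + 2 * t * Real.exp (-(2 * t ^ 2))
            - 2 / Real.sqrt Real.pi * Real.exp (-t ^ 2)) := by
      apply intervalIntegral.integral_congr
      intro t _
      rw [phiAux_eq]
    rw [heq, intervalIntegral.integral_sub (hA.add hB) hC,
      intervalIntegral.integral_add hA hB, intervalIntegral.integral_const_mul]
  have hkey := key_integral_neg x hx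
  rw [hSplit, hInt1, hInt2] at hkey
  unfold erfc erf
  linarith
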